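/- Let k be a commutative ring and n ≥ 0. The maps h_j satisfy the simplicial-homotopy identities with respect to the face maps: (a) d_i ∘ h_j = h_{j−1} ∘ d_i : Δ_n[t] → Δ_n[t] for 0 ≤ i < j ≤ n (with n ≥ 1); (b) d_{j+1} ∘ h_{j+1} = d_{j+1} ∘ h_j : Δ_n[t] → Δ_n[t] for 0 ≤ j ≤ n−1; (c) d_i ∘ h_j = h_j ∘ d_{i−1} : Δ_n[t] → Δ_n[t] for 0 ≤ j ≤ n and j+1 < i ≤ n+1 (with n ≥ 1 in case (c)). -/

import Mathlib

open MvPolynomial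

/-- `SimplexAlg k n` is the `k`-algebra `Δ_n = k[t_0,…,t_n]/(t_0+⋯+t_n − 1)`. -/
noncomputable abbrev SimplexAlg (k : Type*) [CommRing k] (n : ℕ) : Type _ :=
  MvPolynomial (Fin (n + 1)) k ⧸
    Ideal.span {(∑ i, X i : MvPolynomial (Fin (n + 1)) k) - 1}

/-- The image of the variable `t_i` in `Δ_n`. -/
noncomputable def tv (k : Type*) [CommRing k] (n : ℕ) (i : Fin (n + 1)) : SimplexAlg k n :=
  Ideal.Quotient.mk _ (X i)

/-- `IsFace k n r f` says that the `k`-algebra homomorphism `f : Δ_{n+1} → Δ_n` satisfies the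
defining conditions of the face map `d_r`: `d_r(t_i) = t_i` for `i < r`, `d_r(t_r) = 0`, and
`d_r(t_i) = t_{i-1}` for `i > r`. -/
def IsFace (k : Type*) [CommRing k] (n r : ℕ)
    (f : SimplexAlg k (n + 1) →ₐ[k] SimplexAlg k n) : Prop :=
  (∀ (i : Fin (n + 2)) (_ : (i : ℕ) < r) (h' : (i : ℕ) < n + 1),
      f (tv k (n + 1) i) = tv k n ⟨i, h'⟩) ∧
  (∀ i : Fin (n + 2), (i : ℕ) = r → f (tv k (n + 1) i) = 0) ∧
  (∀ (i : Fin (n + 2)) (_ : r < (i : ℕ)),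
      f (tv k (n + 1) i) = tv k n ⟨(i : ℕ) - 1, by have := i.isLt; omega⟩)

/-- `IsDegen k n r f` says that the `k`-algebra homomorphism `f : Δ_n → Δ_{n+1}` satisfies the
defining conditions of the degeneracy map `s_r`: `s_r(t_i) = t_i` for `i < r`,
`s_r(t_r) = t_r + t_{r+1}`, and `s_r(t_i) = t_{i+1}` for `i > r`. -/
def IsDegen (k : Type*) [CommRing k] (n r : ℕ)
    (f : SimplexAlg k n →ₐ[k] SimplexAlg k (n + 1)) : Prop :=
  (∀ (i : Fin (n + 1)) (_ : (i : ℕ) < r),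
      f (tv k n i) = tv k (n + 1) ⟨i, by have := i.isLt; omega⟩) ∧
  (∀ i : Fin (n + 1), (i : ℕ) = r →
      f (tv k n i) = tv k (n + 1) ⟨i, by have := i.isLt; omega⟩ +
        tv k (n + 1) ⟨(i : ℕ) + 1, by have := i.isLt; omega⟩) ∧
  (∀ (i : Fin (n + 1)) (_ : r < (i : ℕ)),
      f (tv k n i) = tv k (n + 1) ⟨(i : ℕ) + 1, by have := i.isLt; omega⟩)

/-- The element `t_{j+1} + ⋯ + t_{n+1}` of `Δ_{n+1}`. -/
noncomputable def tailSum (k : Type*) [CommRing k] (n j : ℕ) : SimplexAlg k (n + 1) :=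
  ∑ i : Fin (n + 2), if j + 1 ≤ (i : ℕ) then tv k (n + 1) i else 0

/-- `IsHtpy k n j s h` says that the `k`-algebra homomorphism `h : Δ_n[t] → Δ_{n+1}[t]`
sends `t` to `t·(t_{j+1}+⋯+t_{n+1})` and restricts on `Δ_n` to `s` (to be the degeneracy `s_j`). -/
def IsHtpy (k : Type*) [CommRing k] (n j : ℕ)
    (s : SimplexAlg k n →ₐ[k] SimplexAlg k (n + 1))
    (h : Polynomial (SimplexAlg k n) →ₐ[k] Polynomial (SimplexAlg k (n + 1))) : Prop :=
  h Polynomial.X = Polynomial.C (tailSum k n j) * Polynomial.X ∧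
  ∀ a : SimplexAlg k n, h (Polynomial.C a) = Polynomial.C (s a)

/-- `IsPolyExt f F` says that `F` is the coefficientwise extension of `f` to polynomial rings,
fixing the variable `t`. -/
def IsPolyExt {k B₁ B₂ : Type*} [CommRing k] [CommRing B₁] [CommRing B₂]
    [Algebra k B₁] [Algebra k B₂] (f : B₁ →ₐ[k] B₂)
    (F : Polynomial B₁ →ₐ[k] Polynomial B₂) : Prop :=
  F Polynomial.X = Polynomial.X ∧ ∀ b : B₁, F (Polynomial.C b) = Polynomial.C (f b)

section Aux
variable {k : Type*} [CommRing k]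

lemma tv_congr {n : ℕ} {i j : Fin (n + 1)} (h : (i : ℕ) = (j : ℕ)) :
    tv k n i = tv k n j := by rw [Fin.ext h]

set_option synthInstance.maxHeartbeats 1000000 in
lemma sum_tv (n : ℕ) : (∑ i : Fin (n + 1), tv k n i) = 1 := by
  have h : (∑ i : Fin (n + 1), tv k n i) =
      Ideal.Quotient.mk (Ideal.span {(∑ i, X i : MvPolynomial (Fin (n + 1)) k) - 1})
        (∑ i, X i) := (map_sum _ _ _).symm
  rw [h, ← map_one (Ideal.Quotient.mk _), Ideal.Quotient.mk_eq_mk_iff_sub_mem]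
  exact Ideal.subset_span rfl

lemma simplexAlg_hom_ext {n : ℕ} {B : Type*} [CommRing B] [Algebra k B]
    {f g : SimplexAlg k n →ₐ[k] B} (h : ∀ i, f (tv k n i) = g (tv k n i)) :
    f = g := by
  have h2 : f.comp (Ideal.Quotient.mkₐ k _) = g.comp (Ideal.Quotient.mkₐ k _) :=
    MvPolynomial.algHom_ext fun i => h i
  ext x
  obtain ⟨y, rfl⟩ := Ideal.Quotient.mk_surjective x
  exact DFunLike.congr_fun h2 y

lemma polyHom_ext {A B : Type*} [CommRing A] [CommRing B] [Algebra k A] [Algebra k B]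
    {F G : Polynomial A →ₐ[k] Polynomial B} (hX : F Polynomial.X = G Polynomial.X)
    (hC : ∀ a, F (Polynomial.C a) = G (Polynomial.C a)) : F = G := by
  apply AlgHom.ext
  intro p
  induction p using Polynomial.induction_on with
  | C a => exact hC a
  | add p q hp hq => rw [map_add, map_add, hp, hq]
  | monomial n a ih =>
      simp only [map_mul, map_pow, hX, hC a]

lemma tailSum_add_headSum (n j : ℕ) :
    tailSum k n j + (∑ i : Fin (n + 2), if (i : ℕ) ≤ j then tv k (n + 1) i else 0) = 1 := by
  rw [tailSum, ← Finset.sum_add_distrib, ← sum_tv (k := k) (n + 1)]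
  refine Finset.sum_congr rfl fun l _ => ?_
  by_cases h : j + 1 ≤ (l : ℕ)
  · rw [if_pos h, if_neg (by omega), add_zero]
  · rw [if_neg h, if_pos (by omega), zero_add]

end Aux

set_option maxHeartbeats 2000000 in
/-- the simplicial-homotopy identities of the maps `h_j` with respect to the face
maps (all face maps extended coefficientwise to the polynomial rings, fixing `t`):
(a) `d_i ∘ h_j = h_{j-1} ∘ d_i : Δ_n[t] → Δ_n[t]` for `0 ≤ i < j ≤ n`, `n ≥ 1` (here `n = m+1`);
(b) `d_{j+1} ∘ h_{j+1} = d_{j+1} ∘ h_j : Δ_n[t] → Δ_n[t]` for `0 ≤ j ≤ n - 1`;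
(c) `d_i ∘ h_j = h_j ∘ d_{i-1} : Δ_n[t] → Δ_n[t]` for `0 ≤ j`, `j+1 < i ≤ n+1`, `n ≥ 1`
    (here `n = m+1`). -/
theorem face_comp_htpy (k : Type*) [CommRing k] :
    (∀ (m i j : ℕ), i < j → j ≤ m + 1 →
      ∀ (sj : SimplexAlg k (m + 1) →ₐ[k] SimplexAlg k (m + 2)), IsDegen k (m + 1) j sj →
      ∀ (hj : Polynomial (SimplexAlg k (m + 1)) →ₐ[k] Polynomial (SimplexAlg k (m + 2))),
        IsHtpy k (m + 1) j sj hj →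
      ∀ (di : SimplexAlg k (m + 2) →ₐ[k] SimplexAlg k (m + 1)), IsFace k (m + 1) i di →
      ∀ (Di : Polynomial (SimplexAlg k (m + 2)) →ₐ[k] Polynomial (SimplexAlg k (m + 1))),
        IsPolyExt di Di →
      ∀ (di' : SimplexAlg k (m + 1) →ₐ[k] SimplexAlg k m), IsFace k m i di' →
      ∀ (Di' : Polynomial (SimplexAlg k (m + 1)) →ₐ[k] Polynomial (SimplexAlg k m)),
        IsPolyExt di' Di' →
      ∀ (sj' : SimplexAlg k m →ₐ[k] SimplexAlg k (m + 1)), IsDegen k m (j - 1) sj' →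
      ∀ (hj' : Polynomial (SimplexAlg k m) →ₐ[k] Polynomial (SimplexAlg k (m + 1))),
        IsHtpy k m (j - 1) sj' hj' →
        Di.comp hj = hj'.comp Di') ∧
    (∀ (n j : ℕ), j + 1 ≤ n →
      ∀ (sj : SimplexAlg k n →ₐ[k] SimplexAlg k (n + 1)), IsDegen k n j sj →
      ∀ (hj : Polynomial (SimplexAlg k n) →ₐ[k] Polynomial (SimplexAlg k (n + 1))),
        IsHtpy k n j sj hj →
      ∀ (sj1 : SimplexAlg k n →ₐ[k] SimplexAlg k (n + 1)), IsDegen k n (j + 1) sj1 →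
      ∀ (hj1 : Polynomial (SimplexAlg k n) →ₐ[k] Polynomial (SimplexAlg k (n + 1))),
        IsHtpy k n (j + 1) sj1 hj1 →
      ∀ (dj1 : SimplexAlg k (n + 1) →ₐ[k] SimplexAlg k n), IsFace k n (j + 1) dj1 →
      ∀ (Dj1 : Polynomial (SimplexAlg k (n + 1)) →ₐ[k] Polynomial (SimplexAlg k n)),
        IsPolyExt dj1 Dj1 →
        Dj1.comp hj1 = Dj1.comp hj) ∧
    (∀ (m i j : ℕ), j + 1 < i → i ≤ m + 2 →
      ∀ (sj : SimplexAlg k (m + 1) →ₐ[k] SimplexAlg k (m + 2)), IsDegen k (m + 1) j sj →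
      ∀ (hj : Polynomial (SimplexAlg k (m + 1)) →ₐ[k] Polynomial (SimplexAlg k (m + 2))),
        IsHtpy k (m + 1) j sj hj →
      ∀ (di : SimplexAlg k (m + 2) →ₐ[k] SimplexAlg k (m + 1)), IsFace k (m + 1) i di →
      ∀ (Di : Polynomial (SimplexAlg k (m + 2)) →ₐ[k] Polynomial (SimplexAlg k (m + 1))),
        IsPolyExt di Di →
      ∀ (di' : SimplexAlg k (m + 1) →ₐ[k] SimplexAlg k m), IsFace k m (i - 1) di' →
      ∀ (Di' : Polynomial (SimplexAlg k (m + 1)) →ₐ[k] Polynomial (SimplexAlg k m)),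
        IsPolyExt di' Di' →
      ∀ (sj' : SimplexAlg k m →ₐ[k] SimplexAlg k (m + 1)), IsDegen k m j sj' →
      ∀ (hj' : Polynomial (SimplexAlg k m) →ₐ[k] Polynomial (SimplexAlg k (m + 1))),
        IsHtpy k m j sj' hj' →
        Di.comp hj = hj'.comp Di') := by
  refine ⟨?_, ?_, ?_⟩
  · intro m i j hij hjm sj hsj hj hhj di hdi Di hDi di' hdi' Di' hDi' sj' hsj' hj' hhj'
    have hta : di (tailSum k (m + 1) j) = tailSum k m (j - 1) := by
      rw [tailSum, map_sum]
      have step : ∀ l : Fin (m + 3),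
          di (if j + 1 ≤ (l : ℕ) then tv k (m + 2) l else 0)
            = if j + 1 ≤ (l : ℕ) then tv k (m + 1) ⟨(l : ℕ) - 1, by have := l.isLt; omega⟩
              else 0 := by
        intro l
        split_ifs with hle
        · exact hdi.2.2 l (by first | omega | (simp <;> omega))
        · exact map_zero _
      rw [Finset.sum_congr rfl fun l _ => step l, Fin.sum_univ_succ]
      rw [if_neg (by simp), zero_add, tailSum]
      refine Finset.sum_congr rfl fun l _ => ?_
      by_cases hc : j ≤ (l : ℕ)
      · rw [if_pos (by simp [Fin.val_succ]; omega), if_pos (by first | omega | (simp <;> omega))]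
        exact tv_congr (by simp [Fin.val_succ])
      · rw [if_neg (by simp [Fin.val_succ]; omega), if_neg (by first | omega | (simp <;> omega))]
    have key : di.comp sj = sj'.comp di' := by
      refine simplexAlg_hom_ext fun l => ?_
      simp only [AlgHom.comp_apply]
      rcases Nat.lt_trichotomy (l : ℕ) i with hl | hl | hl
      · rw [hsj.1 l (by first | omega | (simp <;> omega)), hdi.1 ⟨(l : ℕ), by first | omega | (simp <;> omega)⟩ hl (by first | omega | (simp <;> omega)),
          hdi'.1 l hl (by first | omega | (simp <;> omega)), hsj'.1 ⟨(l : ℕ), by first | omega | (simp <;> omega)⟩ (by first | omega | (simp <;> omega))]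
      · rw [hsj.1 l (by first | omega | (simp <;> omega)), hdi.2.1 ⟨(l : ℕ), by first | omega | (simp <;> omega)⟩ hl,
          hdi'.2.1 l hl, map_zero]
      · rcases Nat.lt_trichotomy (l : ℕ) j with h2 | h2 | h2
        · rw [hsj.1 l h2, hdi.2.2 ⟨(l : ℕ), by first | omega | (simp <;> omega)⟩ hl,
            hdi'.2.2 l hl, hsj'.1 ⟨(l : ℕ) - 1, by first | omega | (simp <;> omega)⟩ (by first | omega | (simp <;> omega))]
        · rw [hsj.2.1 l h2, map_add, hdi.2.2 ⟨(l : ℕ), by first | omega | (simp <;> omega)⟩ (by first | omega | (simp <;> omega)),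
            hdi.2.2 ⟨(l : ℕ) + 1, by first | omega | (simp <;> omega)⟩ (by first | omega | (simp <;> omega)),
            hdi'.2.2 l hl, hsj'.2.1 ⟨(l : ℕ) - 1, by first | omega | (simp <;> omega)⟩ (by first | omega | (simp <;> omega))]
          exact congrArg₂ (· + ·) (tv_congr (by first | omega | (simp <;> omega))) (tv_congr (by first | omega | (simp <;> omega)))
        · rw [hsj.2.2 l h2, hdi.2.2 ⟨(l : ℕ) + 1, by first | omega | (simp <;> omega)⟩ (by first | omega | (simp <;> omega)),
            hdi'.2.2 l hl, hsj'.2.2 ⟨(l : ℕ) - 1, by first | omega | (simp <;> omega)⟩ (by first | omega | (simp <;> omega))]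
          exact tv_congr (by first | omega | (simp <;> omega))
    refine polyHom_ext ?_ ?_
    · rw [AlgHom.comp_apply, AlgHom.comp_apply, hhj.1, hDi'.1, hhj'.1, map_mul,
        hDi.2, hDi.1, hta]
    · intro a
      rw [AlgHom.comp_apply, AlgHom.comp_apply, hhj.2, hDi.2, hDi'.2, hhj'.2]
      exact congrArg _ (DFunLike.congr_fun key a)
  · intro n j hjn sj hsj hj hhj sj1 hsj1 hj1 hhj1 dj1 hdj1 Dj1 hDj1
    have hta : dj1 (tailSum k n (j + 1)) = dj1 (tailSum k n j) := by
      rw [tailSum, tailSum, map_sum, map_sum]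
      refine Finset.sum_congr rfl fun l _ => ?_
      by_cases h1 : j + 2 ≤ (l : ℕ)
      · rw [if_pos h1, if_pos (by first | omega | (simp <;> omega))]
      · by_cases h2 : (l : ℕ) = j + 1
        · rw [if_neg (by first | omega | (simp <;> omega)), if_pos (by first | omega | (simp <;> omega)), map_zero, hdj1.2.1 l h2]
        · rw [if_neg (by first | omega | (simp <;> omega)), if_neg (by first | omega | (simp <;> omega))]
    have key : dj1.comp sj1 = dj1.comp sj := by
      refine simplexAlg_hom_ext fun l => ?_
      simp only [AlgHom.comp_apply]
      have lhs : dj1 (sj1 (tv k n l)) = tv k n l := by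
        rcases Nat.lt_trichotomy (l : ℕ) (j + 1) with hl | hl | hl
        · rw [hsj1.1 l hl, hdj1.1 ⟨(l : ℕ), by first | omega | (simp <;> omega)⟩ hl (by first | omega | (simp <;> omega))]
        · rw [hsj1.2.1 l hl, map_add, hdj1.2.1 ⟨(l : ℕ), by first | omega | (simp <;> omega)⟩ hl,
            hdj1.2.2 ⟨(l : ℕ) + 1, by first | omega | (simp <;> omega)⟩ (by first | omega | (simp <;> omega)), zero_add]
          exact tv_congr (by first | omega | (simp <;> omega))
        · rw [hsj1.2.2 l hl, hdj1.2.2 ⟨(l : ℕ) + 1, by first | omega | (simp <;> omega)⟩ (by first | omega | (simp <;> omega))]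
          exact tv_congr (by first | omega | (simp <;> omega))
      have rhs : dj1 (sj (tv k n l)) = tv k n l := by
        rcases Nat.lt_trichotomy (l : ℕ) j with hl | hl | hl
        · rw [hsj.1 l hl, hdj1.1 ⟨(l : ℕ), by first | omega | (simp <;> omega)⟩ (by first | omega | (simp <;> omega)) (by first | omega | (simp <;> omega))]
        · rw [hsj.2.1 l hl, map_add, hdj1.1 ⟨(l : ℕ), by first | omega | (simp <;> omega)⟩ (by first | omega | (simp <;> omega)) (by first | omega | (simp <;> omega)),
            hdj1.2.1 ⟨(l : ℕ) + 1, by first | omega | (simp <;> omega)⟩ (by first | omega | (simp <;> omega)), add_zero]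
        · rw [hsj.2.2 l hl, hdj1.2.2 ⟨(l : ℕ) + 1, by first | omega | (simp <;> omega)⟩ (by first | omega | (simp <;> omega))]
          exact tv_congr (by first | omega | (simp <;> omega))
      rw [lhs, rhs]
    refine polyHom_ext ?_ ?_
    · rw [AlgHom.comp_apply, AlgHom.comp_apply, hhj1.1, hhj.1, map_mul, map_mul,
        hDj1.2, hDj1.2, hta]
    · intro a
      rw [AlgHom.comp_apply, AlgHom.comp_apply, hhj1.2, hhj.2, hDj1.2, hDj1.2]
      exact congrArg _ (DFunLike.congr_fun key a)
  · intro m i j hij him sj hsj hj hhj di hdi Di hDi di' hdi' Di' hDi' sj' hsj' hj' hhj'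
    have hta : di (tailSum k (m + 1) j) = tailSum k m j := by
      have hd : di (∑ l : Fin (m + 3), if (l : ℕ) ≤ j then tv k (m + 2) l else 0)
          = ∑ l : Fin (m + 2), if (l : ℕ) ≤ j then tv k (m + 1) l else 0 := by
        rw [map_sum, Fin.sum_univ_castSucc]
        have hlast : di (if ((Fin.last (m + 2) : Fin (m + 3)) : ℕ) ≤ j
            then tv k (m + 2) (Fin.last (m + 2)) else 0) = 0 := by
          rw [if_neg (by simp <;> omega), map_zero]
        rw [hlast, add_zero]
        refine Finset.sum_congr rfl fun l _ => ?_
        by_cases hc : (l : ℕ) ≤ j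
        · rw [if_pos (by simp <;> omega), if_pos hc,
            hdi.1 l.castSucc (by simp <;> omega) (by simp <;> omega)]
          exact tv_congr (by simp)
        · rw [if_neg (by simp <;> omega), if_neg hc, map_zero]
      have e1 := tailSum_add_headSum (k := k) (m + 1) j
      have e2 := tailSum_add_headSum (k := k) m j
      have e3 := congrArg di e1
      rw [map_add, map_one, hd] at e3
      have e4 : di (tailSum k (m + 1) j)
          = 1 - ∑ l : Fin (m + 2), if (l : ℕ) ≤ j then tv k (m + 1) l else 0 :=
        eq_sub_of_add_eq e3
      rw [e4, ← e2]; ring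
    have key : di.comp sj = sj'.comp di' := by
      refine simplexAlg_hom_ext fun l => ?_
      simp only [AlgHom.comp_apply]
      rcases Nat.lt_trichotomy (l : ℕ) j with hl | hl | hl
      · rw [hsj.1 l (by first | omega | (simp <;> omega)), hdi.1 ⟨(l : ℕ), by first | omega | (simp <;> omega)⟩ (by first | omega | (simp <;> omega)) (by first | omega | (simp <;> omega)),
          hdi'.1 l (by first | omega | (simp <;> omega)) (by first | omega | (simp <;> omega)), hsj'.1 ⟨(l : ℕ), by first | omega | (simp <;> omega)⟩ (by first | omega | (simp <;> omega))]
      · rw [hsj.2.1 l hl, map_add, hdi.1 ⟨(l : ℕ), by first | omega | (simp <;> omega)⟩ (by first | omega | (simp <;> omega)) (by first | omega | (simp <;> omega)),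
          hdi.1 ⟨(l : ℕ) + 1, by first | omega | (simp <;> omega)⟩ (by first | omega | (simp <;> omega)) (by first | omega | (simp <;> omega)),
          hdi'.1 l (by first | omega | (simp <;> omega)) (by first | omega | (simp <;> omega)), hsj'.2.1 ⟨(l : ℕ), by first | omega | (simp <;> omega)⟩ (by first | omega | (simp <;> omega))]
      · rcases Nat.lt_trichotomy ((l : ℕ) + 1) i with h2 | h2 | h2
        · rw [hsj.2.2 l hl, hdi.1 ⟨(l : ℕ) + 1, by first | omega | (simp <;> omega)⟩ (by first | omega | (simp <;> omega)) (by first | omega | (simp <;> omega)),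
            hdi'.1 l (by first | omega | (simp <;> omega)) (by first | omega | (simp <;> omega)), hsj'.2.2 ⟨(l : ℕ), by first | omega | (simp <;> omega)⟩ (by first | omega | (simp <;> omega))]
        · rw [hsj.2.2 l hl, hdi.2.1 ⟨(l : ℕ) + 1, by first | omega | (simp <;> omega)⟩ (by first | omega | (simp <;> omega)),
            hdi'.2.1 l (by first | omega | (simp <;> omega)), map_zero]
        · rw [hsj.2.2 l hl, hdi.2.2 ⟨(l : ℕ) + 1, by first | omega | (simp <;> omega)⟩ (by first | omega | (simp <;> omega)),
            hdi'.2.2 l (by first | omega | (simp <;> omega)), hsj'.2.2 ⟨(l : ℕ) - 1, by first | omega | (simp <;> omega)⟩ (by first | omega | (simp <;> omega))]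
          exact tv_congr (by first | omega | (simp <;> omega))
    refine polyHom_ext ?_ ?_
    · rw [AlgHom.comp_apply, AlgHom.comp_apply, hhj.1, hDi'.1, hhj'.1, map_mul,
        hDi.2, hDi.1, hta]
    · intro a
      rw [AlgHom.comp_apply, AlgHom.comp_apply, hhj.2, hDi.2, hDi'.2, hhj'.2]
      exact congrArg _ (DFunLike.congr_fun key a)
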